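/- Let Ω ⊆ ℝ³ be open, let u : Ω → ℝ³ be continuously differentiable with div u = 0 on Ω, and let v : Ω → ℝ³ be twice continuously differentiable. Set ω := curl v. Then on Ω, div(ω ⊗ u) − ω·∇u = curl(u·∇v − (∇v)ᵀu), where (u·∇v)ⁱ = ∑_k uᵏ ∂_k vⁱ and ((∇v)ᵀu)ⁱ = ∑_k uᵏ ∂ᵢvᵏ. -/

import Mathlib

noncomputable section

local notation "E3" => EuclideanSpace ℝ (Fin 3)

/-- The partial derivative `∂_k f` of a scalar field `f : ℝ³ → ℝ` at `x`. -/
noncomputable def pd (f : E3 → ℝ) (k : Fin 3) (x : E3) : ℝ :=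
  fderiv ℝ f x (EuclideanSpace.single k 1)

/-- Divergence of a vector field `v : ℝ³ → ℝ³` at `x`: `div v = ∑ᵢ ∂ᵢvⁱ`. -/
noncomputable def div3 (v : E3 → E3) (x : E3) : ℝ :=
  ∑ i : Fin 3, pd (fun y => v y i) i x

/-- Curl of a vector field `v : ℝ³ → ℝ³` at `x` (with `0`-based indices):
`curl v = (∂₁v² − ∂₂v¹, ∂₂v⁰ − ∂₀v², ∂₀v¹ − ∂₁v⁰)`. -/
noncomputable def curl3 (v : E3 → E3) (x : E3) : E3 :=
  (WithLp.equiv 2 (Fin 3 → ℝ)).symm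
    ![pd (fun y => v y 2) 1 x - pd (fun y => v y 1) 2 x,
      pd (fun y => v y 0) 2 x - pd (fun y => v y 2) 0 x,
      pd (fun y => v y 1) 0 x - pd (fun y => v y 0) 1 x]

lemma pd_mul {f g : E3 → ℝ} {x : E3} (hf : DifferentiableAt ℝ f x)
    (hg : DifferentiableAt ℝ g x) (k : Fin 3) :
    pd (fun y => f y * g y) k x = f x * pd g k x + g x * pd f k x := by
  simp [pd, fderiv_fun_mul hf hg]

lemma pd_sub {f g : E3 → ℝ} {x : E3} (hf : DifferentiableAt ℝ f x)
    (hg : DifferentiableAt ℝ g x) (k : Fin 3) :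
    pd (fun y => f y - g y) k x = pd f k x - pd g k x := by
  simp [pd, fderiv_fun_sub hf hg]

lemma pd_sum {ι : Type*} (s : Finset ι) {F : ι → E3 → ℝ} {x : E3}
    (h : ∀ i ∈ s, DifferentiableAt ℝ (F i) x) (k : Fin 3) :
    pd (fun y => ∑ i ∈ s, F i y) k x = ∑ i ∈ s, pd (F i) k x := by
  simp [pd, fderiv_fun_sum h]

/-- For `u` continuously differentiable and divergence-free on an open set `Ω` and `v`
twice continuously differentiable on `Ω`, with `ω := curl v`, one has
`div(ω ⊗ u) − ω·∇u = curl(u·∇v − (∇v)ᵀu)` componentwise on `Ω`. -/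
theorem div_tensor_minus_stretching_eq_curl
    (Ω : Set E3) (hΩ : IsOpen Ω)
    (u v : E3 → E3)
    (hu : ContDiffOn ℝ 1 u Ω)
    (hdiv : ∀ x ∈ Ω, div3 u x = 0)
    (hv : ContDiffOn ℝ 2 v Ω) :
    ∀ x ∈ Ω, ∀ i : Fin 3,
      (∑ k : Fin 3, pd (fun y => curl3 v y i * u y k) k x)
        - (∑ k : Fin 3, curl3 v x k * pd (fun y => u y i) k x)
      = curl3
          (fun y => (WithLp.equiv 2 (Fin 3 → ℝ)).symm
            (fun j => (∑ k : Fin 3, u y k * pd (fun z => v z j) k y)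
              - ∑ k : Fin 3, u y k * pd (fun z => v z k) j y))
          x i := by
  intro x hx i
  have hmem := hΩ.mem_nhds hx
  have huAt : ContDiffAt ℝ 1 u x := hu.contDiffAt hmem
  have hvAt : ContDiffAt ℝ 2 v x := hv.contDiffAt hmem
  have hvj : ∀ j : Fin 3, ContDiffAt ℝ 2 (fun y => v y j) x := fun j =>
    contDiffAt_euclidean.1 hvAt j
  have hux : ∀ k : Fin 3, DifferentiableAt ℝ (fun y => u y k) x := fun k =>
    differentiableAt_euclidean.1 (huAt.differentiableAt (by norm_num)) k
  have hfd : ∀ j : Fin 3, DifferentiableAt ℝ (fderiv ℝ (fun y => v y j)) x := fun j =>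
    (((hvj j).fderiv_right (m := 1) (by norm_num)).differentiableAt (by norm_num))
  have hpdv : ∀ j k : Fin 3, DifferentiableAt ℝ (fun y => pd (fun z => v z j) k y) x := by
    intro j k
    simp only [pd]
    exact (hfd j).clm_apply (differentiableAt_const _)
  have hsymm : ∀ j k m : Fin 3, pd (fun y => pd (fun z => v z j) k y) m x
      = pd (fun y => pd (fun z => v z j) m y) k x := by
    intro j k m
    have hs := ((hvj j).isSymmSndFDerivAt (by simp)) (EuclideanSpace.single m 1)
        (EuclideanSpace.single k 1)
    have hrw : ∀ a b : Fin 3, pd (fun y => pd (fun z => v z j) a y) b x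
        = fderiv ℝ (fderiv ℝ (fun z => v z j)) x (EuclideanSpace.single b 1)
            (EuclideanSpace.single a 1) := by
      intro a b
      simp only [pd]
      rw [fderiv_clm_apply (hfd j) (differentiableAt_const _)]
      simp
    rw [hrw, hrw, hs]
  have hL : ∀ j₁ k₁ j₂ k₂ k : Fin 3,
      pd (fun y => (pd (fun z => v z j₁) k₁ y - pd (fun z => v z j₂) k₂ y) * u y k) k x
      = (pd (fun y => pd (fun z => v z j₁) k₁ y) k x
          - pd (fun y => pd (fun z => v z j₂) k₂ y) k x) * u x k
        + (pd (fun z => v z j₁) k₁ x - pd (fun z => v z j₂) k₂ x)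
            * pd (fun y => u y k) k x := by
    intro j₁ k₁ j₂ k₂ k
    rw [pd_mul ((hpdv j₁ k₁).fun_sub (hpdv j₂ k₂)) (hux k),
        pd_sub (hpdv j₁ k₁) (hpdv j₂ k₂)]
    ring
  have hR : ∀ j m : Fin 3,
      pd (fun y => (∑ k : Fin 3, u y k * pd (fun z => v z j) k y)
            - ∑ k : Fin 3, u y k * pd (fun z => v z k) j y) m x
      = (∑ k : Fin 3, (pd (fun y => u y k) m x * pd (fun z => v z j) k x
            + u x k * pd (fun y => pd (fun z => v z j) k y) m x))
        - ∑ k : Fin 3, (pd (fun y => u y k) m x * pd (fun z => v z k) j x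
            + u x k * pd (fun y => pd (fun z => v z k) j y) m x) := by
    intro j m
    have h1 : ∀ k ∈ (Finset.univ : Finset (Fin 3)),
        DifferentiableAt ℝ (fun y => u y k * pd (fun z => v z j) k y) x :=
      fun k _ => (hux k).mul (hpdv j k)
    have h2 : ∀ k ∈ (Finset.univ : Finset (Fin 3)),
        DifferentiableAt ℝ (fun y => u y k * pd (fun z => v z k) j y) x :=
      fun k _ => (hux k).mul (hpdv k j)
    rw [pd_sub (DifferentiableAt.fun_sum h1) (DifferentiableAt.fun_sum h2),
        pd_sum _ h1 m, pd_sum _ h2 m]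
    congr 1
    · exact Finset.sum_congr rfl fun k _ => by
        rw [pd_mul (hux k) (hpdv j k)]; ring
    · exact Finset.sum_congr rfl fun k _ => by
        rw [pd_mul (hux k) (hpdv k j)]; ring
  fin_cases i
  · simp only [curl3, WithLp.equiv_symm_apply, PiLp.toLp_apply, Fin.reduceFinMk, Matrix.cons_val_zero,
      Matrix.cons_val_one, Matrix.head_cons, Matrix.cons_val_two, Matrix.tail_cons]
    rw [hR 2 1, hR 1 2]
    simp only [Fin.sum_univ_three, Matrix.cons_val_zero, Matrix.cons_val_one, Matrix.head_cons,
      Matrix.cons_val_two, Matrix.tail_cons]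
    rw [hL 2 1 1 2 0, hL 2 1 1 2 1, hL 2 1 1 2 2]
    simp only [hsymm 0 1 0, hsymm 0 2 0, hsymm 0 2 1, hsymm 1 1 0, hsymm 1 2 0,
      hsymm 1 2 1, hsymm 2 1 0, hsymm 2 2 0, hsymm 2 2 1]
    ring
  · simp only [curl3, WithLp.equiv_symm_apply, PiLp.toLp_apply, Fin.reduceFinMk, Matrix.cons_val_zero,
      Matrix.cons_val_one, Matrix.head_cons, Matrix.cons_val_two, Matrix.tail_cons]
    rw [hR 0 2, hR 2 0]
    simp only [Fin.sum_univ_three, Matrix.cons_val_zero, Matrix.cons_val_one, Matrix.head_cons,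
      Matrix.cons_val_two, Matrix.tail_cons]
    rw [hL 0 2 2 0 0, hL 0 2 2 0 1, hL 0 2 2 0 2]
    simp only [hsymm 0 1 0, hsymm 0 2 0, hsymm 0 2 1, hsymm 1 1 0, hsymm 1 2 0,
      hsymm 1 2 1, hsymm 2 1 0, hsymm 2 2 0, hsymm 2 2 1]
    ring
  · simp only [curl3, WithLp.equiv_symm_apply, PiLp.toLp_apply, Fin.reduceFinMk, Matrix.cons_val_zero,
      Matrix.cons_val_one, Matrix.head_cons, Matrix.cons_val_two, Matrix.tail_cons]
    rw [hR 1 0, hR 0 1]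
    simp only [Fin.sum_univ_three, Matrix.cons_val_zero, Matrix.cons_val_one, Matrix.head_cons,
      Matrix.cons_val_two, Matrix.tail_cons]
    rw [hL 1 0 0 1 0, hL 1 0 0 1 1, hL 1 0 0 1 2]
    simp only [hsymm 0 1 0, hsymm 0 2 0, hsymm 0 2 1, hsymm 1 1 0, hsymm 1 2 0,
      hsymm 1 2 1, hsymm 2 1 0, hsymm 2 2 0, hsymm 2 2 1]
    ring
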